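/- Consider the baseline algorithm with Markovian processor availability: let {g(k)}_{k∈ℕ} be a time-homogeneous Markov chain on the finite state space {1,…,G} with transition matrix Q, and suppose that conditioned on g(k) = ς the processor is unavailable at step k (i.e. no control is computed) with probability p_{0|ς}, independently of the past given g(k). The state evolves as x(k+1) = f(x(k),0,0) when the processor is unavailable and x(k+1) = f(x(k),κ(x(k)),0) otherwise, with x(0) independent of the chain and E[φ₂(|x(0)|)] < ∞. Define p̂₀ := max_{ς∈{1,…,G}} p_{0|ς} and suppose α ∈ [1, 1/p̂₀) satisfies V(f(x,0,0)) ≤ α·V(x) for all x. If p̂₀·α + (1−p̂₀)·ρ < 1, then the closed loop is stochastically stable: ∑_{k=0}^∞ E[φ₁(|x(k)|)] < ∞. -/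

import Mathlib

open MeasureTheory ProbabilityTheory Filter


open MeasureTheory ProbabilityTheory Filter in
lemma aux_trim_bound {Ω : Type*} [mΩ : MeasurableSpace Ω] (μ : Measure Ω)
    {m' : MeasurableSpace Ω} (hle : m' ≤ mΩ) {Aset : Set Ω}
    (c : ENNReal)
    (hbound : ∀ S : Set Ω, MeasurableSet[m'] S → μ (Aset ∩ S) ≤ c * μ S)
    {h : Ω → ENNReal} (hh : Measurable[m'] h) :
    ∫⁻ ω in Aset, h ω ∂μ ≤ c * ∫⁻ ω, h ω ∂μ := by
  have htrim : (μ.restrict Aset).trim hle ≤ (c • μ).trim hle := by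
    refine Measure.le_iff.mpr fun S hS => ?_
    rw [trim_measurableSet_eq hle hS, trim_measurableSet_eq hle hS,
      Measure.restrict_apply (hle S hS), Set.inter_comm, Measure.smul_apply, smul_eq_mul]
    exact hbound S hS
  calc ∫⁻ ω in Aset, h ω ∂μ
      = ∫⁻ ω, h ω ∂((μ.restrict Aset).trim hle) := (lintegral_trim hle hh).symm
    _ ≤ ∫⁻ ω, h ω ∂((c • μ).trim hle) := lintegral_mono' htrim le_rfl
    _ = ∫⁻ ω, h ω ∂(c • μ) := lintegral_trim hle hh
    _ = c * ∫⁻ ω, h ω ∂μ := lintegral_smul_measure c h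

/-- The "past" σ-algebra used in the conditional availability hypothesis. -/
def pastSigma {Ω E : Type*} [MeasurableSpace E] {G : ℕ} (g : ℕ → Ω → Fin G)
    (A : ℕ → Ω → Bool) (x0 : Ω → E) (k : ℕ) : MeasurableSpace Ω :=
  (⨆ j ∈ Finset.range (k + 1), MeasurableSpace.comap (g j) ⊤) ⊔
    (⨆ j ∈ Finset.range k, MeasurableSpace.comap (A j) ⊤) ⊔
    MeasurableSpace.comap x0 inferInstance

/-- Stochastic stability of the baseline algorithm with Markovian processor
availability (Theorem 4). The processor state `{g(k)}` is a Markov chain with transition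
matrix `Q`; given `g(k) = ς` the processor is unavailable with probability `p_{0|ς}`,
independently of the past. With `p̂₀ = max_ς p_{0|ς}` and `α ∈ [1, 1/p̂₀)`, the condition
`p̂₀α + (1−p̂₀)ρ < 1` implies `∑_{k=0}^∞ E[φ₁(|x(k)|)] < ∞`. -/
theorem stmt_12
    {n p' m G : ℕ}
    (f : EuclideanSpace ℝ (Fin n) → EuclideanSpace ℝ (Fin p') → EuclideanSpace ℝ (Fin m) →
      EuclideanSpace ℝ (Fin n))
    (hfmeas : Measurable fun q : EuclideanSpace ℝ (Fin n) × EuclideanSpace ℝ (Fin p') ×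
      EuclideanSpace ℝ (Fin m) => f q.1 q.2.1 q.2.2)
    (hf0 : f 0 0 0 = 0)
    (V : EuclideanSpace ℝ (Fin n) → ℝ) (hVmeas : Measurable V) (hVnonneg : ∀ x, 0 ≤ V x)
    (κ : EuclideanSpace ℝ (Fin n) → EuclideanSpace ℝ (Fin p')) (hκmeas : Measurable κ)
    -- Assumption 1: class-K∞ bounds and closed-loop contraction
    (φ₁ φ₂ : ℝ → ℝ)
    (hφ₁K : Continuous φ₁ ∧ φ₁ 0 = 0 ∧ StrictMonoOn φ₁ (Set.Ici 0) ∧ Tendsto φ₁ atTop atTop)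
    (hφ₂K : Continuous φ₂ ∧ φ₂ 0 = 0 ∧ StrictMonoOn φ₂ (Set.Ici 0) ∧ Tendsto φ₂ atTop atTop)
    (ρ : ℝ) (hρ0 : 0 ≤ ρ) (hρ1 : ρ < 1)
    (hsandwich : ∀ x, φ₁ ‖x‖ ≤ V x ∧ V x ≤ φ₂ ‖x‖)
    (hcontract : ∀ x, V (f x (κ x) 0) ≤ ρ * V x)
    -- probability space, Markov chain of processor states and availability indicators
    {Ω : Type*} [MeasurableSpace Ω] (μ : Measure Ω) [IsProbabilityMeasure μ]
    (g : ℕ → Ω → Fin G) (hgmeas : ∀ k, Measurable (g k))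
    (A : ℕ → Ω → Bool) (hAmeas : ∀ k, Measurable (A k))
    (x0 : Ω → EuclideanSpace ℝ (Fin n)) (hx0meas : Measurable x0)
    (Q : Matrix (Fin G) (Fin G) ℝ)
    (hQ0 : ∀ i j, 0 ≤ Q i j) (hQrow : ∀ i, ∑ j, Q i j = 1)
    (p0g : Fin G → ℝ) (hp0g : ∀ ς, 0 ≤ p0g ς ∧ p0g ς ≤ 1)
    -- Markov transition property of the chain (conditionally on the whole past)
    (hMarkov : ∀ k (ς ς' : Fin G) (S : Set Ω),
      MeasurableSet[(⨆ j ∈ Finset.range (k + 1), MeasurableSpace.comap (g j) ⊤) ⊔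
        (⨆ j ∈ Finset.range (k + 1), MeasurableSpace.comap (A j) ⊤) ⊔
        MeasurableSpace.comap x0 inferInstance] S →
      μ ({ω | g (k + 1) ω = ς'} ∩ {ω | g k ω = ς} ∩ S)
        = ENNReal.ofReal (Q ς ς') * μ ({ω | g k ω = ς} ∩ S))
    -- conditional unavailability probability given the processor state, independent of the past
    (hAcond : ∀ k (ς : Fin G) (S : Set Ω),
      MeasurableSet[(⨆ j ∈ Finset.range (k + 1), MeasurableSpace.comap (g j) ⊤) ⊔
        (⨆ j ∈ Finset.range k, MeasurableSpace.comap (A j) ⊤) ⊔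
        MeasurableSpace.comap x0 inferInstance] S →
      μ ({ω | A k ω = true} ∩ {ω | g k ω = ς} ∩ S)
        = ENNReal.ofReal (p0g ς) * μ ({ω | g k ω = ς} ∩ S))
    -- initial state independent of the chain and the availability process
    (hx0indep : IndepFun x0 (fun ω k => (g k ω, A k ω)) μ)
    (hx0int : ∫⁻ ω, ENNReal.ofReal (φ₂ ‖x0 ω‖) ∂μ < ⊤)
    -- worst-case unavailability probability p̂₀ = max_ς p_{0|ς}
    (phat₀ : ℝ) (hphatub : ∀ ς, p0g ς ≤ phat₀) (hphatmem : ∃ ς, p0g ς = phat₀)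
    -- Assumption 3: open-loop growth bound with α ∈ [1, 1/p̂₀)
    (α : ℝ) (hα1 : 1 ≤ α) (hαp : phat₀ * α < 1)
    (hgrow : ∀ x, V (f x 0 0) ≤ α * V x)
    -- the closed-loop trajectory of the baseline algorithm
    (x : ℕ → Ω → EuclideanSpace ℝ (Fin n))
    (hxinit : ∀ ω, x 0 ω = x0 ω)
    (hxrec : ∀ k ω, x (k + 1) ω =
      if A k ω = true then f (x k ω) 0 0 else f (x k ω) (κ (x k ω)) 0)
    -- stability condition
    (hstab : phat₀ * α + (1 - phat₀) * ρ < 1) :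
    ∑' k : ℕ, ∫⁻ ω, ENNReal.ofReal (φ₁ ‖x k ω‖) ∂μ < ⊤ := by
  classical
  obtain ⟨ς₀, hς₀⟩ := hphatmem
  have hphat0 : 0 ≤ phat₀ := hς₀ ▸ (hp0g ς₀).1
  have hphat1 : phat₀ ≤ 1 := hς₀ ▸ (hp0g ς₀).2
  have hα0 : 0 ≤ α := le_trans zero_le_one hα1
  set c : ℝ := phat₀ * α + (1 - phat₀) * ρ with hc
  have hc0 : 0 ≤ c :=
    add_nonneg (mul_nonneg hphat0 hα0) (mul_nonneg (by linarith) hρ0)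
  -- the past σ-algebras
  set P : ℕ → MeasurableSpace Ω := pastSigma g A x0 with hP
  have hleP : ∀ k, P k ≤ ‹MeasurableSpace Ω› := by
    intro k
    refine sup_le (sup_le ?_ ?_) ?_
    · refine iSup₂_le fun j _ => ?_
      rintro s ⟨t, -, rfl⟩
      exact hgmeas j MeasurableSet.of_discrete
    · refine iSup₂_le fun j _ => ?_
      rintro s ⟨t, -, rfl⟩
      exact hAmeas j MeasurableSet.of_discrete
    · exact measurable_iff_comap_le.mp hx0meas
  have hPmono : ∀ k, P k ≤ P (k + 1) := by
    intro k
    refine sup_le_sup (sup_le_sup ?_ ?_) le_rfl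
    · exact biSup_mono fun j hj => by simp only [Finset.mem_range] at *; omega
    · exact biSup_mono fun j hj => by simp only [Finset.mem_range] at *; omega
  have hAG : ∀ k, Measurable[P (k + 1)] (A k) := by
    intro k
    refine measurable_iff_comap_le.mpr (le_trans (MeasurableSpace.comap_mono le_top) ?_)
    refine le_trans (le_biSup (fun j => MeasurableSpace.comap (A j) ⊤)
      (Finset.mem_range.mpr (Nat.lt_succ_self k))) ?_
    exact le_sup_right.trans le_sup_left
  -- measurability of the trajectory w.r.t. the past σ-algebras
  have hxG : ∀ k, Measurable[P k] (x k) := by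
    intro k
    induction k with
    | zero =>
      have : x 0 = x0 := funext hxinit
      rw [this]
      exact measurable_iff_comap_le.mpr le_sup_right
    | succ k ih =>
      have hxk : Measurable[P (k + 1)] (x k) := ih.mono (hPmono k) le_rfl
      have h1 : Measurable[P (k + 1)] fun ω => f (x k ω) 0 0 :=
        hfmeas.comp (hxk.prodMk (measurable_const.prodMk measurable_const))
      have h2 : Measurable[P (k + 1)] fun ω => f (x k ω) (κ (x k ω)) 0 :=
        hfmeas.comp (hxk.prodMk ((hκmeas.comp hxk).prodMk measurable_const))
      have hset : MeasurableSet[P (k + 1)] {ω | A k ω = true} :=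
        (hAG k) (MeasurableSet.singleton true)
      have : x (k + 1) = fun ω =>
          if A k ω = true then f (x k ω) 0 0 else f (x k ω) (κ (x k ω)) 0 :=
        funext (hxrec k)
      rw [this]
      exact Measurable.ite hset h1 h2
  have hxm : ∀ k, Measurable (x k) := fun k => (hxG k).mono (hleP k) le_rfl
  -- the Lyapunov integrals
  set I : ℕ → ENNReal := fun k => ∫⁻ ω, ENNReal.ofReal (V (x k ω)) ∂μ with hI
  have hVG : ∀ k, Measurable[P k] fun ω => ENNReal.ofReal (V (x k ω)) :=
    fun k => ENNReal.measurable_ofReal.comp (hVmeas.comp (hxG k))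
  -- the partition lemma over processor states
  have hpart : ∀ k (T : Set Ω), MeasurableSet T →
      μ T = ∑ ς : Fin G, μ ({ω | g k ω = ς} ∩ T) := by
    intro k T hT
    have hU : T = ⋃ ς : Fin G, {ω | g k ω = ς} ∩ T := by
      ext ω; simp
    have hdis : Pairwise (Function.onFun Disjoint fun ς : Fin G => {ω | g k ω = ς} ∩ T) := by
      intro ς ς' hne
      simp only [Function.onFun, Set.disjoint_left]
      rintro ω ⟨h1, -⟩ ⟨h2, -⟩
      exact hne (h1.symm.trans h2)
    have hms : ∀ ς : Fin G, MeasurableSet ({ω | g k ω = ς} ∩ T) :=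
      fun ς => ((hgmeas k) (MeasurableSet.singleton ς)).inter hT
    have hme := measure_iUnion (μ := μ) hdis hms
    rw [tsum_fintype] at hme
    rw [← hme, ← hU]
  -- the key conditional bound
  have hkey : ∀ k (S : Set Ω), MeasurableSet[P k] S →
      μ ({ω | A k ω = true} ∩ S) ≤ ENNReal.ofReal phat₀ * μ S := by
    intro k S hS
    have hSm : MeasurableSet S := hleP k S hS
    calc μ ({ω | A k ω = true} ∩ S)
        = ∑ ς : Fin G, μ ({ω | g k ω = ς} ∩ ({ω | A k ω = true} ∩ S)) :=
          hpart k _ (((hAmeas k) (MeasurableSet.singleton true)).inter hSm)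
      _ = ∑ ς : Fin G, μ ({ω | A k ω = true} ∩ {ω | g k ω = ς} ∩ S) := by
          refine Finset.sum_congr rfl fun ς _ => ?_
          congr 1
          ext ω; constructor
          · rintro ⟨h1, h2, h3⟩; exact ⟨⟨h2, h1⟩, h3⟩
          · rintro ⟨⟨h2, h1⟩, h3⟩; exact ⟨h1, h2, h3⟩
      _ = ∑ ς : Fin G, ENNReal.ofReal (p0g ς) * μ ({ω | g k ω = ς} ∩ S) := by
          refine Finset.sum_congr rfl fun ς _ => hAcond k ς S hS
      _ ≤ ∑ ς : Fin G, ENNReal.ofReal phat₀ * μ ({ω | g k ω = ς} ∩ S) := by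
          refine Finset.sum_le_sum fun ς _ => ?_
          exact mul_le_mul_left (ENNReal.ofReal_le_ofReal (hphatub ς)) _
      _ = ENNReal.ofReal phat₀ * μ S := by
          rw [← Finset.mul_sum, ← hpart k S hSm]
  -- one-step contraction in expectation
  have hstep : ∀ k, I (k + 1) ≤ ENNReal.ofReal c * I k := by
    intro k
    set Aset : Set Ω := {ω | A k ω = true} with hAset
    have hAk : MeasurableSet Aset := (hAmeas k) (MeasurableSet.singleton true)
    set J := ∫⁻ ω in Aset, ENNReal.ofReal (V (x k ω)) ∂μ with hJ
    set K := ∫⁻ ω in Asetᶜ, ENNReal.ofReal (V (x k ω)) ∂μ with hK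
    have hJK : J + K = I k := lintegral_add_compl _ hAk
    have hJle : J ≤ ENNReal.ofReal phat₀ * I k :=
      aux_trim_bound μ (hleP k) (ENNReal.ofReal phat₀) (hkey k) (hVG k)
    have hsplit : I (k + 1) ≤ ENNReal.ofReal α * J + ENNReal.ofReal ρ * K := by
      have e1 : ∫⁻ ω in Aset, ENNReal.ofReal (V (x (k + 1) ω)) ∂μ
          ≤ ENNReal.ofReal α * J := by
        rw [hJ, ← lintegral_const_mul' _ _ ENNReal.ofReal_ne_top]
        refine setLIntegral_mono' hAk fun ω hω => ?_
        have hω' : A k ω = true := hω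
        rw [hxrec k ω, if_pos hω', ← ENNReal.ofReal_mul hα0]
        exact ENNReal.ofReal_le_ofReal (hgrow _)
      have e2 : ∫⁻ ω in Asetᶜ, ENNReal.ofReal (V (x (k + 1) ω)) ∂μ
          ≤ ENNReal.ofReal ρ * K := by
        rw [hK, ← lintegral_const_mul' _ _ ENNReal.ofReal_ne_top]
        refine setLIntegral_mono' hAk.compl fun ω hω => ?_
        have hωA : ¬ (A k ω = true) := hω
        rw [hxrec k ω, if_neg hωA, ← ENNReal.ofReal_mul hρ0]
        exact ENNReal.ofReal_le_ofReal (hcontract _)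
      calc I (k + 1) = (∫⁻ ω in Aset, ENNReal.ofReal (V (x (k + 1) ω)) ∂μ)
            + ∫⁻ ω in Asetᶜ, ENNReal.ofReal (V (x (k + 1) ω)) ∂μ :=
            (lintegral_add_compl _ hAk).symm
        _ ≤ ENNReal.ofReal α * J + ENNReal.ofReal ρ * K := add_le_add e1 e2
    have hαsplit : ENNReal.ofReal α = ENNReal.ofReal ρ + ENNReal.ofReal (α - ρ) := by
      rw [← ENNReal.ofReal_add hρ0 (by linarith)]
      ring_nf
    calc I (k + 1) ≤ ENNReal.ofReal α * J + ENNReal.ofReal ρ * K := hsplit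
      _ = ENNReal.ofReal ρ * (J + K) + ENNReal.ofReal (α - ρ) * J := by
          rw [hαsplit]; ring
      _ ≤ ENNReal.ofReal ρ * I k
            + ENNReal.ofReal (α - ρ) * (ENNReal.ofReal phat₀ * I k) := by
          rw [hJK]
          exact add_le_add le_rfl (mul_le_mul_right hJle _)
      _ = ENNReal.ofReal c * I k := by
          rw [← mul_assoc, ← ENNReal.ofReal_mul (by linarith),
            ← add_mul, ← ENNReal.ofReal_add hρ0 (mul_nonneg (by linarith) hphat0)]
          congr 2
          rw [hc]; ring
  -- geometric decay
  have hgeo : ∀ k, I k ≤ (ENNReal.ofReal c) ^ k * I 0 := by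
    intro k
    induction k with
    | zero => simp
    | succ k ih =>
      calc I (k + 1) ≤ ENNReal.ofReal c * I k := hstep k
        _ ≤ ENNReal.ofReal c * ((ENNReal.ofReal c) ^ k * I 0) := mul_le_mul_right ih _
        _ = (ENNReal.ofReal c) ^ (k + 1) * I 0 := by ring
  have hI0 : I 0 < ⊤ := by
    refine lt_of_le_of_lt ?_ hx0int
    refine lintegral_mono fun ω => ?_
    rw [hxinit ω]
    exact ENNReal.ofReal_le_ofReal (hsandwich _).2
  have hclt : ENNReal.ofReal c < 1 := ENNReal.ofReal_lt_one.mpr hstab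
  calc ∑' k : ℕ, ∫⁻ ω, ENNReal.ofReal (φ₁ ‖x k ω‖) ∂μ
      ≤ ∑' k : ℕ, I k := by
        refine ENNReal.tsum_le_tsum fun k => ?_
        exact lintegral_mono fun ω => ENNReal.ofReal_le_ofReal (hsandwich _).1
    _ ≤ ∑' k : ℕ, (ENNReal.ofReal c) ^ k * I 0 := ENNReal.tsum_le_tsum hgeo
    _ = (∑' k : ℕ, (ENNReal.ofReal c) ^ k) * I 0 := ENNReal.tsum_mul_right
    _ = (1 - ENNReal.ofReal c)⁻¹ * I 0 := by rw [ENNReal.tsum_geometric]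
    _ < ⊤ := by
        refine ENNReal.mul_lt_top ?_ hI0
        simp only [ENNReal.inv_lt_top]
        exact tsub_pos_of_lt hclt
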